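/- arXiv:1608.04305 — 7 statements merged into one kernel-verified Lean document; each statement's English description precedes it below -/
import Mathlib

section
/- Let s₁ ∈ ℝ^{2n×2n} and s₂ ∈ ℝ^{2n×2l} satisfy s₁ σ_{2n} s₁^T + s₂ σ_{2l} s₂^T = σ_{2n} and s₁ s₁^T + s₂ s₂^T = I_{2n}. Then there exist s₃ ∈ ℝ^{2l×2n} and s₄ ∈ ℝ^{2l×2l} such that the block matrix S = [[s₁, s₂], [s₃, s₄]] is both symplectic (with respect to σ_{2n} ⊕ σ_{2l}) and orthogonal. -/
open Matrix

set_option linter.unusedSectionVars false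
set_option maxHeartbeats 1000000

/-- The standard symplectic form `σ_{2k} = [[0, I_k], [-I_k, 0]]`. -/
def symJ (k : ℕ) : Matrix (Fin k ⊕ Fin k) (Fin k ⊕ Fin k) ℝ :=
  Matrix.fromBlocks 0 1 (-1) 0

namespace OSExt

variable {ι κ : Type*} [Fintype ι] [Fintype κ] [DecidableEq ι] [DecidableEq κ]

/-- generalized symplectic form -/
def Jm (ι : Type*) [DecidableEq ι] : Matrix (ι ⊕ ι) (ι ⊕ ι) ℝ :=
  Matrix.fromBlocks 0 1 (-1) 0

lemma Jm_transpose (ι : Type*) [DecidableEq ι] : (Jm ι)ᵀ = -Jm ι := by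
  simp [Jm, Matrix.fromBlocks_transpose, Matrix.fromBlocks_neg]

lemma Jm_mul_Jm (ι : Type*) [Fintype ι] [DecidableEq ι] : Jm ι * Jm ι = -1 := by
  simp [Jm, Matrix.fromBlocks_multiply, Matrix.fromBlocks_neg, ← Matrix.fromBlocks_one]

/-- realification of a complex matrix -/
def ofC (N : Matrix ι κ ℂ) : Matrix (ι ⊕ ι) (κ ⊕ κ) ℝ :=
  Matrix.fromBlocks (of fun i j => (N i j).re) (of fun i j => (N i j).im)
    (of fun i j => -(N i j).im) (of fun i j => (N i j).re)

def toC (M : Matrix (ι ⊕ ι) (κ ⊕ κ) ℝ) : Matrix ι κ ℂ :=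
  of fun i j => ⟨M (.inl i) (.inl j), M (.inl i) (.inr j)⟩

lemma ofC_injective : Function.Injective (ofC (ι := ι) (κ := κ)) := by
  intro N N' h
  ext i j
  exact Complex.ext (by simpa [ofC] using congrFun (congrFun h (.inl i)) (.inl j))
    (by simpa [ofC] using congrFun (congrFun h (.inl i)) (.inr j))

lemma ofC_one : ofC (1 : Matrix ι ι ℂ) = 1 := by
  ext (i | i) (j | j) <;>
    simp [ofC, Matrix.one_apply, apply_ite Complex.re, apply_ite Complex.im]

lemma ofC_smul_I_one : ofC (Complex.I • (1 : Matrix ι ι ℂ)) = Jm ι := by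
  ext (i | i) (j | j) <;>
    simp [ofC, Jm, Matrix.one_apply, apply_ite Complex.re, apply_ite Complex.im,
      apply_ite (fun x : ℂ => Complex.I * x)]

lemma ofC_mul {τ : Type*} [Fintype τ] [DecidableEq τ] (N : Matrix ι κ ℂ) (N' : Matrix κ τ ℂ) :
    ofC (N * N') = ofC N * ofC N' := by
  ext (i | i) (j | j) <;>
    simp [ofC, Matrix.mul_apply, Fintype.sum_sum_type, Complex.re_sum, Complex.im_sum,
      Complex.mul_re, Complex.mul_im, Finset.sum_add_distrib, Finset.sum_sub_distrib,
      sub_eq_add_neg, neg_add] <;>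
    abel

lemma ofC_transpose (N : Matrix ι κ ℂ) : (ofC N)ᵀ = ofC Nᴴ := by
  ext (i | i) (j | j) <;> simp [ofC, Matrix.conjTranspose_apply]

lemma eq_ofC_toC (M : Matrix (ι ⊕ ι) (κ ⊕ κ) ℝ) (h : M * Jm κ = Jm ι * M) :
    M = ofC (toC M) := by
  have h22 : ∀ i j, M (.inr i) (.inr j) = M (.inl i) (.inl j) := by
    intro i j
    have := congrFun (congrFun h (.inr i)) (.inl j)
    simpa [Jm, Matrix.mul_apply, Fintype.sum_sum_type, Matrix.one_apply,
      Finset.sum_ite_eq, Finset.sum_ite_eq'] using this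
  have h21 : ∀ i j, M (.inr i) (.inl j) = -M (.inl i) (.inr j) := by
    intro i j
    have := congrFun (congrFun h (.inr i)) (.inr j)
    simpa [Jm, Matrix.mul_apply, Fintype.sum_sum_type, Matrix.one_apply,
      Finset.sum_ite_eq, Finset.sum_ite_eq'] using this
  ext (i | i) (j | j)
  · simp [ofC, toC]
  · simp [ofC, toC]
  · simp [ofC, toC, h21 i j]
  · simp [ofC, toC, h22 i j]

lemma exists_rows_complement {n l : ℕ} {μ : Type*} [Fintype μ] [DecidableEq μ]
    (hcard : Fintype.card μ = n + l) (N : Matrix (Fin n) μ ℂ) (h : N * Nᴴ = 1) :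
    ∃ P : Matrix (Fin l) μ ℂ, P * Pᴴ = 1 ∧ N * Pᴴ = 0 := by
  classical
  let le := WithLp.linearEquiv 2 ℂ (μ → ℂ)
  let lin : EuclideanSpace ℂ μ →ₗ[ℂ] (Fin n → ℂ) := N.mulVecLin ∘ₗ le.toLinearMap
  have hsurj : Function.Surjective lin := by
    intro y
    refine ⟨le.symm (Nᴴ.mulVec y), ?_⟩
    simp only [lin, LinearMap.coe_comp, Function.comp_apply, LinearEquiv.coe_coe,
      LinearEquiv.apply_symm_apply, Matrix.mulVecLin_apply]
    rw [Matrix.mulVec_mulVec, h, Matrix.one_mulVec]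
  have hdim : Module.finrank ℂ (LinearMap.ker lin) = l := by
    have h1 := LinearMap.finrank_range_add_finrank_ker lin
    rw [LinearMap.range_eq_top.mpr hsurj, finrank_top] at h1
    have h2 : Module.finrank ℂ (EuclideanSpace ℂ μ) = n + l := by
      rw [finrank_euclideanSpace, hcard]
    have h3 : Module.finrank ℂ (Fin n → ℂ) = n := by simp
    omega
  let b := (stdOrthonormalBasis ℂ (LinearMap.ker lin)).reindex (finCongr hdim)
  have hb : ∀ i j, (inner ℂ ((b i : EuclideanSpace ℂ μ)) ((b j : EuclideanSpace ℂ μ)) : ℂ)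
      = if i = j then 1 else 0 := by
    intro i j
    rw [← Submodule.coe_inner]
    exact orthonormal_iff_ite.mp b.orthonormal i j
  have hker : ∀ i, N.mulVec ((b i : EuclideanSpace ℂ μ) : μ → ℂ) = 0 := by
    intro i
    have h2 := (b i).2
    rw [LinearMap.mem_ker] at h2
    simp only [lin, le, LinearMap.coe_comp, Function.comp_apply, LinearEquiv.coe_coe,
      Matrix.mulVecLin_apply, WithLp.linearEquiv_apply] at h2
    exact h2
  refine ⟨Matrix.of fun i j => star ((b i : EuclideanSpace ℂ μ) j), ?_, ?_⟩
  · ext i j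
    have := hb i j
    rw [PiLp.inner_apply] at this
    simpa [Matrix.mul_apply, Matrix.one_apply, RCLike.inner_apply, mul_comm] using this
  · ext i j
    have := congrFun (hker j) i
    simpa [Matrix.mul_apply, Matrix.mulVec, dotProduct] using this

lemma commute_Jm (R : Matrix (ι ⊕ ι) (κ ⊕ κ) ℝ)
    (hJ : R * Jm κ * Rᵀ = Jm ι) (hO : R * Rᵀ = 1) :
    R * Jm κ = Jm ι * R := by
  have t1 : R * Jm κ * ((Jm κ)ᵀ * Rᵀ) = 1 := by
    rw [Jm_transpose, Matrix.neg_mul, Matrix.mul_neg, ← Matrix.mul_assoc,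
      Matrix.mul_assoc R, Jm_mul_Jm, Matrix.mul_neg, Matrix.mul_one, Matrix.neg_mul,
      neg_neg, hO]
  have t2 : R * Jm κ * (Rᵀ * (Jm ι)ᵀ) = 1 := by
    rw [Jm_transpose, Matrix.mul_neg, Matrix.mul_neg, ← Matrix.mul_assoc, hJ,
      Jm_mul_Jm, neg_neg]
  have t3 : Jm ι * R * ((Jm κ)ᵀ * Rᵀ) = 1 := by
    rw [Jm_transpose, Matrix.neg_mul, Matrix.mul_neg, ← Matrix.mul_assoc,
      Matrix.mul_assoc (Jm ι) R, Matrix.mul_assoc (Jm ι), hJ, Jm_mul_Jm, neg_neg]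
  have t4 : Jm ι * R * (Rᵀ * (Jm ι)ᵀ) = 1 := by
    rw [Jm_transpose, Matrix.mul_neg, Matrix.mul_neg, ← Matrix.mul_assoc,
      Matrix.mul_assoc (Jm ι) R, ← Matrix.mul_assoc, Matrix.mul_assoc (Jm ι), hO,
      Matrix.mul_one, Jm_mul_Jm, neg_neg]
  have h0 : (R * Jm κ - Jm ι * R) * (R * Jm κ - Jm ι * R)ᵀ = 0 := by
    rw [Matrix.transpose_sub, Matrix.transpose_mul, Matrix.transpose_mul,
      Matrix.sub_mul, Matrix.mul_sub, Matrix.mul_sub, t1, t2, t3, t4]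
    simp
  have : (R * Jm κ - Jm ι * R) * (R * Jm κ - Jm ι * R)ᴴ = 0 := by
    rw [Matrix.conjTranspose_eq_transpose_of_trivial]; exact h0
  exact sub_eq_zero.mp (Matrix.self_mul_conjTranspose_eq_zero.mp this)

end OSExt

open OSExt

theorem extension_to_orthogonal_symplectic (n l : ℕ)
    (s₁ : Matrix (Fin n ⊕ Fin n) (Fin n ⊕ Fin n) ℝ)
    (s₂ : Matrix (Fin n ⊕ Fin n) (Fin l ⊕ Fin l) ℝ)
    (hsymp : s₁ * symJ n * s₁ᵀ + s₂ * symJ l * s₂ᵀ = symJ n)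
    (horth : s₁ * s₁ᵀ + s₂ * s₂ᵀ = 1) :
    ∃ (s₃ : Matrix (Fin l ⊕ Fin l) (Fin n ⊕ Fin n) ℝ)
      (s₄ : Matrix (Fin l ⊕ Fin l) (Fin l ⊕ Fin l) ℝ),
      (Matrix.fromBlocks s₁ s₂ s₃ s₄) *
          (Matrix.fromBlocks (symJ n) 0 0 (symJ l)) *
          (Matrix.fromBlocks s₁ s₂ s₃ s₄)ᵀ
        = Matrix.fromBlocks (symJ n) 0 0 (symJ l) ∧
      (Matrix.fromBlocks s₁ s₂ s₃ s₄) * (Matrix.fromBlocks s₁ s₂ s₃ s₄)ᵀ = 1 := by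
  classical
  let e := Equiv.sumSumSumComm (Fin n) (Fin n) (Fin l) (Fin l)
  have he1 : ∀ a : Fin n, e (Sum.inl (Sum.inl a)) = Sum.inl (Sum.inl a) := fun _ => rfl
  have he2 : ∀ a : Fin n, e (Sum.inl (Sum.inr a)) = Sum.inr (Sum.inl a) := fun _ => rfl
  have he3 : ∀ a : Fin l, e (Sum.inr (Sum.inl a)) = Sum.inl (Sum.inr a) := fun _ => rfl
  have he4 : ∀ a : Fin l, e (Sum.inr (Sum.inr a)) = Sum.inr (Sum.inr a) := fun _ => rfl
  let R' : Matrix (Fin n ⊕ Fin n) ((Fin n ⊕ Fin l) ⊕ (Fin n ⊕ Fin l)) ℝ :=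
    (Matrix.fromCols s₁ s₂).submatrix id ⇑e.symm
  have hJe : Matrix.fromBlocks (symJ n) 0 0 (symJ l)
      = (Jm (Fin n ⊕ Fin l)).submatrix ⇑e ⇑e := by
    ext i j
    rcases i with (a | a) | (a | a) <;> rcases j with (b | b) | (b | b) <;>
      simp [symJ, Jm, Matrix.submatrix_apply, he1, he2, he3, he4, Matrix.one_apply]
  have hsub : Jm (Fin n ⊕ Fin l)
      = (Matrix.fromBlocks (symJ n) 0 0 (symJ l)).submatrix ⇑e.symm ⇑e.symm := by
    rw [hJe]
    ext i j
    simp [Matrix.submatrix_apply]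
  have hR'J : R' * Jm (Fin n ⊕ Fin l) * R'ᵀ = Jm (Fin n) := by
    show (Matrix.fromCols s₁ s₂).submatrix id ⇑e.symm * _ *
      ((Matrix.fromCols s₁ s₂).submatrix id ⇑e.symm)ᵀ = _
    rw [hsub, Matrix.transpose_submatrix, Matrix.submatrix_mul_equiv,
      Matrix.submatrix_mul_equiv, Matrix.submatrix_id_id, Matrix.transpose_fromCols,
      Matrix.fromCols_mul_fromBlocks, Matrix.fromCols_mul_fromRows]
    simpa [symJ, Jm] using hsymp
  have hR'O : R' * R'ᵀ = 1 := by
    show (Matrix.fromCols s₁ s₂).submatrix id ⇑e.symm *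
      ((Matrix.fromCols s₁ s₂).submatrix id ⇑e.symm)ᵀ = _
    rw [Matrix.transpose_submatrix, Matrix.submatrix_mul_equiv, Matrix.submatrix_id_id,
      Matrix.transpose_fromCols, Matrix.fromCols_mul_fromRows]
    exact horth
  have hco := commute_Jm R' hR'J hR'O
  have hR'C : R' = ofC (toC R') := eq_ofC_toC R' hco
  set Nc := toC R' with hNcdef
  have hNN : Nc * Ncᴴ = 1 := by
    apply ofC_injective
    rw [ofC_mul, ← ofC_transpose, ← hR'C, ofC_one]
    exact hR'O
  obtain ⟨P, hPP, hNP⟩ := exists_rows_complement (n := n) (l := l) (μ := Fin n ⊕ Fin l) (by simp) Nc hNN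
  have hPN : P * Ncᴴ = 0 := by
    have h := congrArg Matrix.conjTranspose hNP
    simpa [Matrix.conjTranspose_mul] using h
  set Sc := Matrix.fromRows Nc P with hScdef
  have hU : Sc * Scᴴ = 1 := by
    rw [hScdef, Matrix.conjTranspose_fromRows_eq_fromCols_conjTranspose,
      Matrix.fromRows_mul_fromCols, hNN, hPP, hNP, hPN, Matrix.fromBlocks_one]
  set Sr := ofC Sc with hSrdef
  have hSrO : Sr * Srᵀ = 1 := by
    rw [hSrdef, ofC_transpose, ← ofC_mul, hU, ofC_one]
  have hSrJ : Sr * Jm (Fin n ⊕ Fin l) * Srᵀ = Jm (Fin n ⊕ Fin l) := by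
    rw [hSrdef, ← ofC_smul_I_one, ofC_transpose, ← ofC_mul, ← ofC_mul]
    congr 1
    rw [Matrix.mul_smul, Matrix.mul_one, Matrix.smul_mul, hU]
  have hrow : ∀ (i : Fin n ⊕ Fin n) (c : (Fin n ⊕ Fin l) ⊕ (Fin n ⊕ Fin l)),
      Sr (e (Sum.inl i)) c = ofC Nc i c := by
    rintro (a | a) (c | c) <;>
      simp [hSrdef, hScdef, ofC, Matrix.fromRows_apply_inl, he1, he2]
  have hcols : ∀ (i : Fin n ⊕ Fin n) (c : (Fin n ⊕ Fin l) ⊕ (Fin n ⊕ Fin l)),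
      ofC Nc i c = (Matrix.fromCols s₁ s₂) i (e.symm c) := by
    intro i c
    rw [← hR'C]
    rfl
  have h11 : (Sr.submatrix ⇑e ⇑e).toBlocks₁₁ = s₁ := by
    ext i j
    show Sr (e (Sum.inl i)) (e (Sum.inl j)) = s₁ i j
    rw [hrow, hcols, Equiv.symm_apply_apply]
    rfl
  have h12 : (Sr.submatrix ⇑e ⇑e).toBlocks₁₂ = s₂ := by
    ext i j
    show Sr (e (Sum.inl i)) (e (Sum.inr j)) = s₂ i j
    rw [hrow, hcols, Equiv.symm_apply_apply]
    rfl
  refine ⟨(Sr.submatrix ⇑e ⇑e).toBlocks₂₁, (Sr.submatrix ⇑e ⇑e).toBlocks₂₂, ?_, ?_⟩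
  · rw [← h11, ← h12, Matrix.fromBlocks_toBlocks, hJe, Matrix.transpose_submatrix,
      Matrix.submatrix_mul_equiv, Matrix.submatrix_mul_equiv, hSrJ]
  · rw [← h11, ← h12, Matrix.fromBlocks_toBlocks, Matrix.transpose_submatrix,
      Matrix.submatrix_mul_equiv, hSrO, Matrix.submatrix_one_equiv]
end

section
/- Suppose S = [[s₁, s₂], [s₃, s₄]] and S' = [[s₁, s₂], [s₃', s₄']] are both symplectic and orthogonal 2(n+l)×2(n+l) real matrices with the same top row of blocks (s₁ ∈ ℝ^{2n×2n}, s₂ ∈ ℝ^{2n×2l}). Then there exists an orthogonal symplectic matrix o ∈ Sp(2l) ∩ O(2l) such that S' = (I_{2n} ⊕ o) S. -/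
open Matrix

theorem uniqueness_of_extension (n l : ℕ)
    (s₁ : Matrix (Fin n ⊕ Fin n) (Fin n ⊕ Fin n) ℝ)
    (s₂ : Matrix (Fin n ⊕ Fin n) (Fin l ⊕ Fin l) ℝ)
    (s₃ s₃' : Matrix (Fin l ⊕ Fin l) (Fin n ⊕ Fin n) ℝ)
    (s₄ s₄' : Matrix (Fin l ⊕ Fin l) (Fin l ⊕ Fin l) ℝ)
    (S S' : Matrix ((Fin n ⊕ Fin n) ⊕ (Fin l ⊕ Fin l))
        ((Fin n ⊕ Fin n) ⊕ (Fin l ⊕ Fin l)) ℝ)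
    (hS : S = Matrix.fromBlocks s₁ s₂ s₃ s₄)
    (hS' : S' = Matrix.fromBlocks s₁ s₂ s₃' s₄')
    (σ : Matrix ((Fin n ⊕ Fin n) ⊕ (Fin l ⊕ Fin l))
        ((Fin n ⊕ Fin n) ⊕ (Fin l ⊕ Fin l)) ℝ)
    (hσ : σ = Matrix.fromBlocks (symJ n) 0 0 (symJ l))
    (hSsymp : S * σ * Sᵀ = σ) (hSorth : S * Sᵀ = 1)
    (hS'symp : S' * σ * S'ᵀ = σ) (hS'orth : S' * S'ᵀ = 1) :
    ∃ o : Matrix (Fin l ⊕ Fin l) (Fin l ⊕ Fin l) ℝ,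
      o * symJ l * oᵀ = symJ l ∧ o * oᵀ = 1 ∧
      S' = (Matrix.fromBlocks 1 0 0 o) * S := by
  have hStS : Sᵀ * S = 1 := mul_eq_one_comm.mp hSorth
  set M := S' * Sᵀ with hMdef
  have hMo : M * Mᵀ = 1 := by
    have : M * Mᵀ = S' * (Sᵀ * S) * S'ᵀ := by
      simp [hMdef, Matrix.transpose_mul, mul_assoc]
    rw [this, hStS, mul_one, hS'orth]
  have hσinv : Sᵀ * σ * S = σ := by
    calc Sᵀ * σ * S = Sᵀ * (S * σ * Sᵀ) * S := by rw [hSsymp]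
    _ = (Sᵀ * S) * σ * (Sᵀ * S) := by simp only [mul_assoc]
    _ = σ := by rw [hStS]; simp
  have hMs : M * σ * Mᵀ = σ := by
    have : M * σ * Mᵀ = S' * (Sᵀ * σ * S) * S'ᵀ := by
      simp [hMdef, Matrix.transpose_mul, mul_assoc]
    rw [this, hσinv, hS'symp]
  -- block computations
  have hSS : Matrix.fromBlocks (s₁ * s₁ᵀ + s₂ * s₂ᵀ) (s₁ * s₃ᵀ + s₂ * s₄ᵀ)
      (s₃ * s₁ᵀ + s₄ * s₂ᵀ) (s₃ * s₃ᵀ + s₄ * s₄ᵀ) =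
      Matrix.fromBlocks 1 0 0 1 := by
    rw [Matrix.fromBlocks_one]
    rw [hS] at hSorth
    rw [← hSorth]
    simp [Matrix.fromBlocks_transpose, Matrix.fromBlocks_multiply]
  obtain ⟨h11, h12, -, -⟩ := Matrix.fromBlocks_inj.mp hSS
  set c := s₃' * s₁ᵀ + s₄' * s₂ᵀ with hc
  set o := s₃' * s₃ᵀ + s₄' * s₄ᵀ with ho
  have hM : M = Matrix.fromBlocks 1 0 c o := by
    rw [hMdef, hS, hS']
    simp [Matrix.fromBlocks_transpose, Matrix.fromBlocks_multiply, h11, h12, hc, ho]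
  rw [hM] at hMo hMs
  have hMo' : Matrix.fromBlocks (1 : Matrix (Fin n ⊕ Fin n) (Fin n ⊕ Fin n) ℝ) cᵀ
      c (c * cᵀ + o * oᵀ) = 1 := by
    rw [← hMo]
    simp [Matrix.fromBlocks_transpose, Matrix.fromBlocks_multiply]
  have hc0 : c = 0 := by
    ext i j
    have := congrFun (congrFun hMo' (Sum.inr i)) (Sum.inl j)
    simpa [Matrix.fromBlocks, Matrix.one_apply] using this
  have hoorth : o * oᵀ = 1 := by
    ext i j
    have := congrFun (congrFun hMo' (Sum.inr i)) (Sum.inr j)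
    simpa [Matrix.fromBlocks, Matrix.one_apply, hc0] using this
  have hosymp : o * symJ l * oᵀ = symJ l := by
    rw [hσ, hc0] at hMs
    have : Matrix.fromBlocks (symJ n) 0 0 (o * symJ l * oᵀ) =
        Matrix.fromBlocks (symJ n) 0 0 (symJ l) := by
      rw [← hMs]
      simp [Matrix.fromBlocks_transpose, Matrix.fromBlocks_multiply]
    exact (Matrix.fromBlocks_inj.mp this).2.2.2
  refine ⟨o, hosymp, hoorth, ?_⟩
  have : M * S = S' := by rw [hMdef, mul_assoc, hStS, mul_one]
  rw [← this, hM, hc0]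
end

section
/- If S = [[s₁, s₂], [s₃, s₄]] is a 2(n+l)×2(n+l) orthogonal symplectic matrix (with respect to σ_{2n} ⊕ σ_{2l}, blocks s₁ ∈ ℝ^{2n×2n}, s₂ ∈ ℝ^{2n×2l}), then the matrices Σ̂ := s₂ s₂^T and Σ := s₂ σ_{2l} s₂^T satisfy Σ = σ_{2n} Σ̂ and both Σ̂ and Σ commute with σ_{2n}. -/
open Matrix

theorem sigma_hat_commutation (n l : ℕ)
    (s₁ : Matrix (Fin n ⊕ Fin n) (Fin n ⊕ Fin n) ℝ)
    (s₂ : Matrix (Fin n ⊕ Fin n) (Fin l ⊕ Fin l) ℝ)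
    (s₃ : Matrix (Fin l ⊕ Fin l) (Fin n ⊕ Fin n) ℝ)
    (s₄ : Matrix (Fin l ⊕ Fin l) (Fin l ⊕ Fin l) ℝ)
    (S : Matrix ((Fin n ⊕ Fin n) ⊕ (Fin l ⊕ Fin l))
        ((Fin n ⊕ Fin n) ⊕ (Fin l ⊕ Fin l)) ℝ)
    (hS : S = Matrix.fromBlocks s₁ s₂ s₃ s₄)
    (σ : Matrix ((Fin n ⊕ Fin n) ⊕ (Fin l ⊕ Fin l))
        ((Fin n ⊕ Fin n) ⊕ (Fin l ⊕ Fin l)) ℝ)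
    (hσ : σ = Matrix.fromBlocks (symJ n) 0 0 (symJ l))
    (hSsymp : S * σ * Sᵀ = σ) (hSorth : S * Sᵀ = 1) :
    s₂ * symJ l * s₂ᵀ = symJ n * (s₂ * s₂ᵀ) ∧
      (s₂ * s₂ᵀ) * symJ n = symJ n * (s₂ * s₂ᵀ) ∧
      (s₂ * symJ l * s₂ᵀ) * symJ n = symJ n * (s₂ * symJ l * s₂ᵀ) := by
  have hTS : Sᵀ * S = 1 := mul_eq_one_comm.mp hSorth
  have hc : S * σ = σ * S := by
    calc S * σ = S * σ * Sᵀ * S := by rw [Matrix.mul_assoc (S*σ), hTS, Matrix.mul_one]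
    _ = σ * S := by rw [hSsymp]
  rw [hS, hσ, Matrix.fromBlocks_multiply, Matrix.fromBlocks_multiply] at hc
  have h12 := congrArg Matrix.toBlocks₁₂ hc
  simp only [Matrix.toBlocks_fromBlocks₁₂, Matrix.mul_zero, Matrix.zero_mul,
    add_zero, zero_add] at h12
  -- h12 : s₂ * symJ l = symJ n * s₂
  have hJT : ∀ k : ℕ, (symJ k)ᵀ = -(symJ k) := by
    intro k
    simp [symJ, Matrix.fromBlocks_transpose, Matrix.fromBlocks_neg]
  have h12T : s₂ᵀ * symJ n = symJ l * s₂ᵀ := by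
    have := congrArg Matrix.transpose h12
    simp only [Matrix.transpose_mul, hJT, Matrix.neg_mul, Matrix.mul_neg,
      neg_inj] at this
    exact this.symm
  have key : s₂ * symJ l * s₂ᵀ = symJ n * (s₂ * s₂ᵀ) := by
    rw [h12, Matrix.mul_assoc]
  have g2 : (s₂ * s₂ᵀ) * symJ n = symJ n * (s₂ * s₂ᵀ) := by
    rw [Matrix.mul_assoc, h12T, ← Matrix.mul_assoc, h12, Matrix.mul_assoc]
  refine ⟨key, g2, ?_⟩
  rw [key, Matrix.mul_assoc, g2]
end

section
/- If γ is a real symmetric 2l×2l matrix with γ ≥ i σ_{2l} (i.e., γ − i σ_{2l} is positive semidefinite as a complex Hermitian matrix), then γ is positive definite; in particular γ is invertible. -/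
open Matrix ComplexOrder

lemma symJ_mul_symJ (k : ℕ) : symJ k * symJ k = -1 := by
  simp [symJ, Matrix.fromBlocks_multiply, Matrix.fromBlocks_neg, ← Matrix.fromBlocks_one]

lemma symJ_transpose (k : ℕ) : (symJ k)ᵀ = -(symJ k) := by
  simp [symJ, Matrix.fromBlocks_transpose, Matrix.fromBlocks_neg]

lemma dot_coe {n : Type*} [Fintype n] (x y : n → ℝ) :
    (fun i => (x i : ℂ)) ⬝ᵥ (fun i => (y i : ℂ)) = ((x ⬝ᵥ y : ℝ) : ℂ) := by
  simp [dotProduct]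

lemma mulVec_coe {n : Type*} [Fintype n] (M : Matrix n n ℝ) (x : n → ℝ) :
    (M.map Complex.ofReal) *ᵥ (fun i => (x i : ℂ)) = fun i => ((M *ᵥ x) i : ℂ) := by
  funext i
  simp [Matrix.mulVec, dotProduct]

theorem covariance_matrix_posdef (l : ℕ)
    (γ : Matrix (Fin l ⊕ Fin l) (Fin l ⊕ Fin l) ℝ)
    (hγsym : γᵀ = γ)
    (hγ : Matrix.PosSemidef
      (γ.map Complex.ofReal - Complex.I • (symJ l).map Complex.ofReal)) :
    γ.PosDef ∧ IsUnit γ := by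
  have key : ∀ v : (Fin l ⊕ Fin l) → ℝ, v ≠ 0 → 0 < v ⬝ᵥ (γ *ᵥ v) := by
    intro v hv
    have hineq : ∀ t : ℝ, 0 ≤ v ⬝ᵥ (γ *ᵥ v)
        + t^2 * ((symJ l *ᵥ v) ⬝ᵥ (γ *ᵥ (symJ l *ᵥ v))) - 2*t*(v ⬝ᵥ v) := by
      intro t
      set u := symJ l *ᵥ v with hu
      have hσu : symJ l *ᵥ u = -v := by
        rw [hu, Matrix.mulVec_mulVec, symJ_mul_symJ, Matrix.neg_mulVec, Matrix.one_mulVec]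
      set c : ℂ := (t : ℂ) * Complex.I with hc
      set z : (Fin l ⊕ Fin l) → ℂ := (fun i => (v i : ℂ)) + c • (fun i => (u i : ℂ)) with hz
      have h0 := hγ.dotProduct_mulVec_nonneg z
      have hstar : star z = (fun i => (v i : ℂ)) - c • (fun i => (u i : ℂ)) := by
        funext i
        simp [hz, hc, Complex.ext_iff]
      have hMz : (γ.map Complex.ofReal - Complex.I • (symJ l).map Complex.ofReal) *ᵥ z
          = (fun i => ((γ *ᵥ v) i : ℂ)) + c • (fun i => ((γ *ᵥ u) i : ℂ))
            - Complex.I • (fun i => (u i : ℂ)) + (c * Complex.I) • (fun i => (v i : ℂ)) := by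
        rw [hz, Matrix.mulVec_add, Matrix.mulVec_smul, Matrix.sub_mulVec, Matrix.sub_mulVec,
          Matrix.smul_mulVec, Matrix.smul_mulVec, mulVec_coe, mulVec_coe,
          mulVec_coe, mulVec_coe, ← hu, hσu]
        funext i
        simp
        ring
      have hvu : v ⬝ᵥ u = 0 := by
        have h1 : v ⬝ᵥ u = ((symJ l)ᵀ *ᵥ v) ⬝ᵥ v := by
          rw [hu, Matrix.dotProduct_mulVec, Matrix.mulVec_transpose]
        rw [symJ_transpose, Matrix.neg_mulVec, neg_dotProduct, ← hu,
          ] at h1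
        have h3 := dotProduct_comm v u
        linarith
      have huu : u ⬝ᵥ u = v ⬝ᵥ v := by
        have h1 : u ⬝ᵥ u = ((symJ l)ᵀ *ᵥ u) ⬝ᵥ v := by
          rw [hu, Matrix.dotProduct_mulVec, Matrix.mulVec_transpose]
        rw [symJ_transpose, Matrix.neg_mulVec, hσu, neg_dotProduct] at h1
        simpa using h1
      have hsymdot : v ⬝ᵥ (γ *ᵥ u) = u ⬝ᵥ (γ *ᵥ v) := by
        conv_lhs => rw [Matrix.dotProduct_mulVec, ← hγsym, Matrix.vecMul_transpose]
        rw [dotProduct_comm]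
      rw [hstar, hMz] at h0
      have hdot : ((fun i => (v i : ℂ)) - c • (fun i => (u i : ℂ))) ⬝ᵥ
          ((fun i => ((γ *ᵥ v) i : ℂ)) + c • (fun i => ((γ *ᵥ u) i : ℂ))
            - Complex.I • (fun i => (u i : ℂ)) + (c * Complex.I) • (fun i => (v i : ℂ)))
          = ((v ⬝ᵥ (γ *ᵥ v) + t^2 * (u ⬝ᵥ (γ *ᵥ u)) - 2*t*(v ⬝ᵥ v) : ℝ) : ℂ) := by
        simp only [sub_dotProduct, dotProduct_add, dotProduct_sub,
          dotProduct_smul, smul_dotProduct, smul_eq_mul, dot_coe,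
          hvu, huu, hsymdot, dotProduct_comm u v]
        push_cast
        rw [hc]
        ring_nf
        simp [Complex.I_sq]
        ring
      rw [hdot] at h0
      exact_mod_cast h0
    set a := v ⬝ᵥ (γ *ᵥ v) with ha
    set b := (symJ l *ᵥ v) ⬝ᵥ (γ *ᵥ (symJ l *ᵥ v)) with hb
    set n := v ⬝ᵥ v with hn
    have hnn : 0 ≤ n := Finset.sum_nonneg fun i _ => mul_self_nonneg (v i)
    have hne : n ≠ 0 := fun h => hv (dotProduct_self_eq_zero.mp h)
    have hnpos : 0 < n := lt_of_le_of_ne hnn (Ne.symm hne)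
    have ha0 : 0 ≤ a := by have := hineq 0; linarith
    rcases ha0.lt_or_eq with h | h
    · exact h
    · exfalso
      have hbpos : 0 < b := by nlinarith [hineq 1]
      have h2 := hineq (n / b)
      rw [← h] at h2
      have hb' : (n / b)^2 * b = n^2 / b := by field_simp
      rw [hb'] at h2
      have h3 : n^2/b - 2*(n/b)*n = -(n^2/b) := by
        field_simp
        ring
      have h4 : 0 < n^2/b := div_pos (pow_pos hnpos 2) hbpos
      linarith
  have hH : γ.IsHermitian := by
    rw [Matrix.IsHermitian]
    ext i j
    simpa using congrFun (congrFun hγsym i) j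
  have hpd : γ.PosDef := Matrix.PosDef.of_dotProduct_mulVec_pos hH (fun x hx => by simpa using key x hx)
  exact ⟨hpd, hpd.isUnit⟩
end

section
/- Let X, Y ∈ ℝ^{2n×2n} with Y symmetric, I − X X^T ≥ 0, [X, σ_{2n}] = 0, ker(Y) = ker(I − X X^T), and Y ≥ i σ_{2n} − i X σ_{2n} X^T (as complex Hermitian matrices). Set s₂ := (I − X X^T)^{1/2} and γ_E := s₂^+ Y (s₂^+)^T + P, where s₂^+ is the Moore–Penrose pseudoinverse and P the orthogonal projection onto ker(s₂). Then s₂ s₂^T = I − X X^T, s₂ σ_{2n} s₂^T = σ_{2n} − X σ_{2n} X^T, s₂ γ_E s₂^T = Y, and γ_E ≥ i σ_{2n}. -/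
open Matrix ComplexOrder

/-- The positive semidefinite square root of a positive semidefinite matrix (the definition
`Matrix.PosSemidef.sqrt` of the older Mathlib, since removed). -/
noncomputable def Matrix.PosSemidef.sqrt {m 𝕜 : Type*} [Fintype m] [DecidableEq m] [RCLike 𝕜]
    {A : Matrix m m 𝕜} (hA : A.PosSemidef) : Matrix m m 𝕜 :=
  hA.1.eigenvectorUnitary.1 * diagonal ((↑) ∘ (√·) ∘ hA.1.eigenvalues) *
  (star hA.1.eigenvectorUnitary : Matrix m m 𝕜)

section sqrtPort
open scoped MatrixOrder

lemma Matrix.PosSemidef.sqrt_eq_cfcSqrt {m 𝕜 : Type*} [Fintype m] [DecidableEq m] [RCLike 𝕜]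
    {A : Matrix m m 𝕜} (hA : A.PosSemidef) : hA.sqrt = CFC.sqrt A := by
  rw [CFC.sqrt_eq_cfc, cfc_nnreal_eq_real _ A, hA.1.cfc_eq]
  simp only [IsHermitian.cfc, Unitary.conjStarAlgAut_apply, Matrix.PosSemidef.sqrt]
  congr 3
  funext i
  simp [max_eq_left (hA.eigenvalues_nonneg i)]

lemma Matrix.PosSemidef.posSemidef_sqrt {m 𝕜 : Type*} [Fintype m] [DecidableEq m] [RCLike 𝕜]
    {A : Matrix m m 𝕜} (hA : A.PosSemidef) : hA.sqrt.PosSemidef := by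
  rw [hA.sqrt_eq_cfcSqrt]; exact (CFC.sqrt_nonneg A).posSemidef

lemma Matrix.PosSemidef.sqrt_mul_self {m 𝕜 : Type*} [Fintype m] [DecidableEq m] [RCLike 𝕜]
    {A : Matrix m m 𝕜} (hA : A.PosSemidef) : hA.sqrt * hA.sqrt = A := by
  rw [hA.sqrt_eq_cfcSqrt]; exact CFC.sqrt_mul_sqrt_self A hA.nonneg

lemma Matrix.PosSemidef.eq_sqrt_of_sq_eq {m 𝕜 : Type*} [Fintype m] [DecidableEq m] [RCLike 𝕜]
    {A B : Matrix m m 𝕜} (hB : B.PosSemidef) (hA : A.PosSemidef) (h : B ^ 2 = A) :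
    B = hA.sqrt := by
  rw [hA.sqrt_eq_cfcSqrt]; exact (CFC.sqrt_unique (by rw [← h, pow_two]) hB.nonneg).symm

end sqrtPort

/-- Uniqueness of the Moore–Penrose pseudoinverse. -/
lemma pinv_unique {m : Type*} [Fintype m] [DecidableEq m] (A P Q : Matrix m m ℝ)
    (h1 : A * P * A = A) (h2 : P * A * P = P) (h3 : (A * P)ᵀ = A * P) (h4 : (P * A)ᵀ = P * A)
    (k1 : A * Q * A = A) (k2 : Q * A * Q = Q) (k3 : (A * Q)ᵀ = A * Q) (k4 : (Q * A)ᵀ = Q * A) :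
    P = Q := by
  have hAt : Aᵀ = Aᵀ * (A * Q) := by
    conv_lhs => rw [← k1]
    rw [Matrix.transpose_mul, k3]
  have hAP : A * P = A * Q := by
    calc A * P = (A * P)ᵀ := h3.symm
    _ = Pᵀ * Aᵀ := Matrix.transpose_mul _ _
    _ = Pᵀ * (Aᵀ * (A * Q)) := by rw [← hAt]
    _ = (Pᵀ * Aᵀ) * (A * Q) := by rw [Matrix.mul_assoc]
    _ = (A * P)ᵀ * (A * Q) := by rw [Matrix.transpose_mul]
    _ = (A * P) * (A * Q) := by rw [h3]
    _ = (A * P * A) * Q := by simp only [Matrix.mul_assoc]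
    _ = A * Q := by rw [h1]
  have hAt2 : Aᵀ = (Q * A) * Aᵀ := by
    conv_lhs => rw [← k1, Matrix.mul_assoc]
    rw [Matrix.transpose_mul, k4]
  have hPA : P * A = Q * A := by
    calc P * A = (P * A)ᵀ := h4.symm
    _ = Aᵀ * Pᵀ := Matrix.transpose_mul _ _
    _ = ((Q * A) * Aᵀ) * Pᵀ := by rw [← hAt2]
    _ = (Q * A) * (Aᵀ * Pᵀ) := by rw [Matrix.mul_assoc]
    _ = (Q * A) * (P * A)ᵀ := by rw [Matrix.transpose_mul]
    _ = (Q * A) * (P * A) := by rw [h4]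
    _ = Q * (A * P * A) := by simp only [Matrix.mul_assoc]
    _ = Q * A := by rw [h1]
  calc P = P * A * P := h2.symm
  _ = P * (A * P) := by rw [Matrix.mul_assoc]
  _ = P * (A * Q) := by rw [hAP]
  _ = (P * A) * Q := by rw [Matrix.mul_assoc]
  _ = (Q * A) * Q := by rw [hPA]
  _ = Q := k2






lemma posSemidef_real_smul {m : Type*} [Fintype m] {M : Matrix m m ℂ}
    (hM : M.PosSemidef) {a : ℝ} (ha : 0 ≤ a) : ((a : ℂ) • M).PosSemidef := by
  constructor
  · show ((a : ℂ) • M)ᴴ = (a : ℂ) • M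
    rw [Matrix.conjTranspose_smul, Complex.star_def, Complex.conj_ofReal, hM.1.eq]
  · exact (hM.smul (Complex.zero_le_real.mpr ha)).2

/-- The key positivity computation, done abstractly over `ℂ`. -/
lemma key_psd {m : Type*} [Fintype m] [DecidableEq m]
    (P S Y J : Matrix m m ℂ)
    (hPH : Pᴴ = P) (hQH : (P * S)ᴴ = P * S)
    (hJH : Jᴴ = -J) (hJJ : J * J = -1)
    (hPSP : P * S * P = P)
    (hSJ : S * J = J * S) (hPJ : P * J = J * P) (hPS : P * S = S * P)
    (hA : (Y - Complex.I • (S * J * S)).PosSemidef) :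
    (P * Y * P + (1 - P * S) - Complex.I • J).PosSemidef := by
  have hQQ : (P * S) * (P * S) = P * S := by
    calc (P * S) * (P * S) = (P * S * P) * S := by simp only [Matrix.mul_assoc]
    _ = P * S := by rw [hPSP]
  have hJQ : J * (P * S) = (P * S) * J := by
    calc J * (P * S) = (J * P) * S := by rw [Matrix.mul_assoc]
    _ = P * (J * S) := by rw [← hPJ, Matrix.mul_assoc]
    _ = P * S * J := by rw [← hSJ, Matrix.mul_assoc]
  -- first summand
  have h1 : (P * (Y - Complex.I • (S * J * S)) * Pᴴ).PosSemidef :=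
    hA.mul_mul_conjTranspose_same P
  have e1 : P * (Y - Complex.I • (S * J * S)) * Pᴴ
      = P * Y * P - Complex.I • (J * (P * S)) := by
    rw [hPH, Matrix.mul_sub, Matrix.sub_mul]
    congr 1
    have h : P * (S * J * S) * P = J * (P * S) := by
      calc P * (S * J * S) * P = (P * S) * J * (S * P) := by simp only [Matrix.mul_assoc]
      _ = (P * S) * J * (P * S) := by rw [← hPS]
      _ = J * ((P * S) * (P * S)) := by rw [← hJQ]; simp only [Matrix.mul_assoc]
      _ = J * (P * S) := by rw [hQQ]
    rw [mul_smul_comm, smul_mul_assoc, h]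
  -- second summand
  set B : Matrix m m ℂ := 1 - Complex.I • J with hB
  set N : Matrix m m ℂ := (1 - P * S) * B with hN
  have hBH : Bᴴ = B := by
    rw [hB, Matrix.conjTranspose_sub, Matrix.conjTranspose_one, Matrix.conjTranspose_smul,
      hJH, Complex.star_def, Complex.conj_I, neg_smul, smul_neg, neg_neg]
  have hQH' : (1 - P * S)ᴴ = 1 - P * S := by
    rw [Matrix.conjTranspose_sub, Matrix.conjTranspose_one, hQH]
  have hBB : B * B = (2 : ℂ) • B := by
    rw [hB]
    simp only [Matrix.mul_sub, Matrix.sub_mul, Matrix.mul_one, Matrix.one_mul,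
      smul_mul_assoc, mul_smul_comm, smul_smul, Complex.I_mul_I, hJJ,
      smul_sub, neg_one_smul, smul_neg, neg_neg, two_smul]
    abel_nf
    module
  have hc : (1 - P * S) * J = J * (1 - P * S) := by
    simp only [Matrix.sub_mul, Matrix.mul_sub, Matrix.mul_one, Matrix.one_mul]
    rw [hJQ]
  have hQ1Q : (1 - P * S) * (1 - P * S) = 1 - P * S := by
    simp only [Matrix.mul_sub, Matrix.sub_mul, Matrix.mul_one, Matrix.one_mul]
    rw [hQQ]
    abel
  have hQJQ : (1 - P * S) * J * (1 - P * S) = J * (1 - P * S) := by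
    rw [hc, Matrix.mul_assoc, hQ1Q]
  have e2 : ((1/2 : ℝ) : ℂ) • (N * Nᴴ) = (1 - P * S) - Complex.I • (J * (1 - P * S)) := by
    have hNN : N * Nᴴ = (2 : ℂ) • ((1 - P * S) - Complex.I • (J * (1 - P * S))) := by
      rw [hN, Matrix.conjTranspose_mul, hBH, hQH']
      calc (1 - P * S) * B * (B * (1 - P * S))
          = (1 - P * S) * (B * B) * (1 - P * S) := by simp only [Matrix.mul_assoc]
      _ = (1 - P * S) * ((2 : ℂ) • B) * (1 - P * S) := by rw [hBB]
      _ = (2 : ℂ) • ((1 - P * S) * B * (1 - P * S)) := by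
            rw [mul_smul_comm, smul_mul_assoc]
      _ = (2 : ℂ) • ((1 - P * S) - Complex.I • (J * (1 - P * S))) := by
            congr 1
            have hDB : (1 - P * S) * B = B * (1 - P * S) := by
              rw [hB]
              simp only [Matrix.mul_sub, Matrix.sub_mul, Matrix.mul_one, Matrix.one_mul,
                mul_smul_comm, smul_mul_assoc, hc]
              rw [smul_sub]
              abel
            rw [hDB, Matrix.mul_assoc, hQ1Q, hB]
            simp only [Matrix.sub_mul, Matrix.one_mul, smul_mul_assoc]
    rw [hNN, smul_smul]
    norm_num
  have h2 : (((1/2 : ℝ) : ℂ) • (N * Nᴴ)).PosSemidef :=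
    posSemidef_real_smul (Matrix.posSemidef_self_mul_conjTranspose N) (by norm_num)
  have hsum := Matrix.PosSemidef.add (e1 ▸ h1) (e2 ▸ h2)
  have efin : (P * Y * P - Complex.I • (J * (P * S)))
        + ((1 - P * S) - Complex.I • (J * (1 - P * S)))
      = P * Y * P + (1 - P * S) - Complex.I • J := by
    have h : J * (P * S) + J * (1 - P * S) = J := by
      simp only [Matrix.mul_sub, Matrix.mul_one]; abel
    have h2' : Complex.I • (J * (P * S)) + Complex.I • (J * (1 - P * S))
        = Complex.I • J := by rw [← smul_add, h]
    calc (P * Y * P - Complex.I • (J * (P * S)))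
          + ((1 - P * S) - Complex.I • (J * (1 - P * S)))
        = P * Y * P + (1 - P * S)
          - (Complex.I • (J * (P * S)) + Complex.I • (J * (1 - P * S))) := by abel
    _ = P * Y * P + (1 - P * S) - Complex.I • J := by rw [h2']
  rw [← efin]
  exact hsum

theorem dilation_construction (n : ℕ)
    (X Y : Matrix (Fin n ⊕ Fin n) (Fin n ⊕ Fin n) ℝ)
    (hYsym : Yᵀ = Y)
    (hpsd : Matrix.PosSemidef (1 - X * Xᵀ))
    (hcomm : X * symJ n = symJ n * X)
    (hker : LinearMap.ker Y.mulVecLin = LinearMap.ker (1 - X * Xᵀ).mulVecLin)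
    (hY : Matrix.PosSemidef
      (Y.map Complex.ofReal -
        (Complex.I • (symJ n).map Complex.ofReal -
          Complex.I • (X * symJ n * Xᵀ).map Complex.ofReal)))
    (s₂ : Matrix (Fin n ⊕ Fin n) (Fin n ⊕ Fin n) ℝ)
    (hs₂ : s₂ = hpsd.sqrt)
    -- `p` is the Moore–Penrose pseudoinverse of `s₂`, characterized by the
    -- four Penrose conditions:
    (p : Matrix (Fin n ⊕ Fin n) (Fin n ⊕ Fin n) ℝ)
    (hp1 : s₂ * p * s₂ = s₂) (hp2 : p * s₂ * p = p)
    (hp3 : (s₂ * p)ᵀ = s₂ * p) (hp4 : (p * s₂)ᵀ = p * s₂)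
    -- `1 - p * s₂` is the orthogonal projection onto `ker s₂`:
    (γE : Matrix (Fin n ⊕ Fin n) (Fin n ⊕ Fin n) ℝ)
    (hγE : γE = p * Y * pᵀ + (1 - p * s₂)) :
    s₂ * s₂ᵀ = 1 - X * Xᵀ ∧
      s₂ * symJ n * s₂ᵀ = symJ n - X * symJ n * Xᵀ ∧
      s₂ * γE * s₂ᵀ = Y ∧
      Matrix.PosSemidef
        (γE.map Complex.ofReal - Complex.I • (symJ n).map Complex.ofReal) := by
  -- basic facts about J := symJ n
  have hJt : (symJ n)ᵀ = -(symJ n) := by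
    rw [symJ, Matrix.fromBlocks_transpose, Matrix.fromBlocks_neg]
    simp
  have hJJ : symJ n * symJ n = -1 := by
    rw [symJ, Matrix.fromBlocks_multiply, ← Matrix.fromBlocks_one, Matrix.fromBlocks_neg]
    simp
  have hJJt : symJ n * (symJ n)ᵀ = 1 := by
    rw [hJt, Matrix.mul_neg, hJJ, neg_neg]
  have hJtJ : (symJ n)ᵀ * symJ n = 1 := by
    rw [hJt, Matrix.neg_mul, hJJ, neg_neg]
  -- Xᵀ commutes with J
  have hcommt : Xᵀ * symJ n = symJ n * Xᵀ := by
    have h := congrArg Matrix.transpose hcomm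
    rw [Matrix.transpose_mul, Matrix.transpose_mul, hJt, Matrix.neg_mul, Matrix.mul_neg] at h
    have := neg_injective h
    exact this.symm
  -- J commutes with 1 - X * Xᵀ
  have hJM : symJ n * (1 - X * Xᵀ) = (1 - X * Xᵀ) * symJ n := by
    rw [Matrix.mul_sub, Matrix.sub_mul, Matrix.mul_one, Matrix.one_mul]
    congr 1
    calc symJ n * (X * Xᵀ) = (symJ n * X) * Xᵀ := by rw [Matrix.mul_assoc]
    _ = (X * symJ n) * Xᵀ := by rw [hcomm]
    _ = X * (symJ n * Xᵀ) := by rw [Matrix.mul_assoc]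
    _ = X * (Xᵀ * symJ n) := by rw [hcommt]
    _ = X * Xᵀ * symJ n := by rw [Matrix.mul_assoc]
  -- s₂ is symmetric and squares to 1 - X * Xᵀ
  have hs₂psd : s₂.PosSemidef := hs₂ ▸ hpsd.posSemidef_sqrt
  have hs₂t : s₂ᵀ = s₂ := by
    rw [← Matrix.conjTranspose_eq_transpose_of_trivial]; exact hs₂psd.1
  have hss : s₂ * s₂ = 1 - X * Xᵀ := by rw [hs₂]; exact hpsd.sqrt_mul_self
  -- J commutes with s₂ (uniqueness of the psd square root)
  have hJs : symJ n * s₂ = s₂ * symJ n := by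
    have hTpsd : (symJ n * s₂ * (symJ n)ᵀ).PosSemidef := by
      have h := hs₂psd.mul_mul_conjTranspose_same (symJ n)
      rwa [Matrix.conjTranspose_eq_transpose_of_trivial] at h
    have hTsq : (symJ n * s₂ * (symJ n)ᵀ) ^ 2 = 1 - X * Xᵀ := by
      rw [pow_two]
      calc (symJ n * s₂ * (symJ n)ᵀ) * (symJ n * s₂ * (symJ n)ᵀ)
          = symJ n * s₂ * ((symJ n)ᵀ * symJ n) * (s₂ * (symJ n)ᵀ) := by
            simp only [Matrix.mul_assoc]
      _ = symJ n * (s₂ * s₂) * (symJ n)ᵀ := by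
            rw [hJtJ, Matrix.mul_one]; simp only [Matrix.mul_assoc]
      _ = symJ n * (1 - X * Xᵀ) * (symJ n)ᵀ := by rw [hss]
      _ = (1 - X * Xᵀ) * (symJ n * (symJ n)ᵀ) := by rw [hJM, Matrix.mul_assoc]
      _ = 1 - X * Xᵀ := by rw [hJJt, Matrix.mul_one]
    have hT : symJ n * s₂ * (symJ n)ᵀ = s₂ := by
      have h := hTpsd.eq_sqrt_of_sq_eq hpsd hTsq
      rw [← hs₂] at h
      exact h
    calc symJ n * s₂ = symJ n * s₂ * ((symJ n)ᵀ * symJ n) := by rw [hJtJ, Matrix.mul_one]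
    _ = (symJ n * s₂ * (symJ n)ᵀ) * symJ n := by simp only [Matrix.mul_assoc]
    _ = s₂ * symJ n := by rw [hT]
  -- p is symmetric
  have q1 : s₂ * pᵀ * s₂ = s₂ := by
    have h := congrArg Matrix.transpose hp1
    rw [Matrix.transpose_mul, Matrix.transpose_mul, hs₂t, ← Matrix.mul_assoc] at h
    exact h
  have q2 : pᵀ * s₂ * pᵀ = pᵀ := by
    have h := congrArg Matrix.transpose hp2
    rw [Matrix.transpose_mul, Matrix.transpose_mul, hs₂t, ← Matrix.mul_assoc] at h
    exact h
  have e3 : s₂ * pᵀ = p * s₂ := by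
    calc s₂ * pᵀ = s₂ᵀ * pᵀ := by rw [hs₂t]
    _ = (p * s₂)ᵀ := (Matrix.transpose_mul p s₂).symm
    _ = p * s₂ := hp4
  have e4 : pᵀ * s₂ = s₂ * p := by
    calc pᵀ * s₂ = pᵀ * s₂ᵀ := by rw [hs₂t]
    _ = (s₂ * p)ᵀ := (Matrix.transpose_mul s₂ p).symm
    _ = s₂ * p := hp3
  have q3 : (s₂ * pᵀ)ᵀ = s₂ * pᵀ := by rw [e3]; exact hp4
  have q4 : (pᵀ * s₂)ᵀ = pᵀ * s₂ := by rw [e4]; exact hp3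
  have hpt : pᵀ = p :=
    (pinv_unique s₂ p pᵀ hp1 hp2 hp3 hp4 q1 q2 q3 q4).symm
  have hps : p * s₂ = s₂ * p := by
    conv_lhs => rw [← hpt]
    exact e4
  -- p commutes with J
  have hsJt : s₂ * (symJ n)ᵀ = (symJ n)ᵀ * s₂ := by
    rw [hJt, Matrix.mul_neg, Matrix.neg_mul, hJs]
  have hJsJ : symJ n * s₂ * (symJ n)ᵀ = s₂ := by
    rw [hJs, Matrix.mul_assoc, hJJt, Matrix.mul_one]
  have u1 : s₂ * (symJ n * p * (symJ n)ᵀ) * s₂ = s₂ := by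
    calc s₂ * (symJ n * p * (symJ n)ᵀ) * s₂
        = (s₂ * symJ n) * p * ((symJ n)ᵀ * s₂) := by simp only [Matrix.mul_assoc]
    _ = (symJ n * s₂) * p * (s₂ * (symJ n)ᵀ) := by rw [hJs, hsJt]
    _ = symJ n * (s₂ * p * s₂) * (symJ n)ᵀ := by simp only [Matrix.mul_assoc]
    _ = s₂ := by rw [hp1, hJsJ]
  have hJts : (symJ n)ᵀ * s₂ * symJ n = s₂ := by
    rw [← hsJt, Matrix.mul_assoc, hJtJ, Matrix.mul_one]
  have u2 : (symJ n * p * (symJ n)ᵀ) * s₂ * (symJ n * p * (symJ n)ᵀ)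
      = symJ n * p * (symJ n)ᵀ := by
    calc (symJ n * p * (symJ n)ᵀ) * s₂ * (symJ n * p * (symJ n)ᵀ)
        = symJ n * p * (((symJ n)ᵀ * s₂ * symJ n) * (p * (symJ n)ᵀ)) := by
          simp only [Matrix.mul_assoc]
    _ = symJ n * p * (s₂ * (p * (symJ n)ᵀ)) := by rw [hJts]
    _ = symJ n * (p * s₂ * p) * (symJ n)ᵀ := by simp only [Matrix.mul_assoc]
    _ = symJ n * p * (symJ n)ᵀ := by rw [hp2]
  have uT : ∀ A : Matrix (Fin n ⊕ Fin n) (Fin n ⊕ Fin n) ℝ,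
      (symJ n * A * (symJ n)ᵀ)ᵀ = symJ n * Aᵀ * (symJ n)ᵀ := by
    intro A
    rw [Matrix.transpose_mul, Matrix.transpose_mul, Matrix.transpose_transpose]
    simp only [Matrix.mul_assoc]
  have u3 : (s₂ * (symJ n * p * (symJ n)ᵀ))ᵀ = s₂ * (symJ n * p * (symJ n)ᵀ) := by
    have h1 : s₂ * (symJ n * p * (symJ n)ᵀ) = symJ n * (s₂ * p) * (symJ n)ᵀ := by
      calc s₂ * (symJ n * p * (symJ n)ᵀ) = (s₂ * symJ n) * p * (symJ n)ᵀ := by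
            simp only [Matrix.mul_assoc]
      _ = (symJ n * s₂) * p * (symJ n)ᵀ := by rw [hJs]
      _ = symJ n * (s₂ * p) * (symJ n)ᵀ := by simp only [Matrix.mul_assoc]
    rw [h1, uT, hp3]
  have u4 : ((symJ n * p * (symJ n)ᵀ) * s₂)ᵀ = (symJ n * p * (symJ n)ᵀ) * s₂ := by
    have h1 : (symJ n * p * (symJ n)ᵀ) * s₂ = symJ n * (p * s₂) * (symJ n)ᵀ := by
      calc (symJ n * p * (symJ n)ᵀ) * s₂ = symJ n * p * ((symJ n)ᵀ * s₂) := by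
            simp only [Matrix.mul_assoc]
      _ = symJ n * p * (s₂ * (symJ n)ᵀ) := by rw [hsJt]
      _ = symJ n * (p * s₂) * (symJ n)ᵀ := by simp only [Matrix.mul_assoc]
    rw [h1, uT, hp4]
  have hpJconj : p = symJ n * p * (symJ n)ᵀ :=
    pinv_unique s₂ p (symJ n * p * (symJ n)ᵀ) hp1 hp2 hp3 hp4 u1 u2 u3 u4
  have hpJ : p * symJ n = symJ n * p := by
    calc p * symJ n = (symJ n * p * (symJ n)ᵀ) * symJ n := by rw [← hpJconj]
    _ = symJ n * p * ((symJ n)ᵀ * symJ n) := by simp only [Matrix.mul_assoc]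
    _ = symJ n * p := by rw [hJtJ, Matrix.mul_one]
  -- the projection 1 - p * s₂ kills Y
  have hMQ0 : (1 - X * Xᵀ) * (1 - p * s₂) = 0 := by
    rw [← hss]
    calc s₂ * s₂ * (1 - p * s₂) = s₂ * (s₂ - s₂ * p * s₂) := by
          simp only [Matrix.mul_sub, Matrix.mul_one, Matrix.mul_assoc]
    _ = s₂ * (s₂ - s₂) := by rw [hp1]
    _ = 0 := by rw [sub_self, Matrix.mul_zero]
  have hY1Q : Y * (1 - p * s₂) = 0 := by
    ext i j
    have hmem : ((1 - p * s₂) *ᵥ Pi.single j 1) ∈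
        LinearMap.ker (1 - X * Xᵀ).mulVecLin := by
      rw [LinearMap.mem_ker, Matrix.mulVecLin_apply, Matrix.mulVec_mulVec, hMQ0,
        Matrix.zero_mulVec]
    rw [← hker, LinearMap.mem_ker, Matrix.mulVecLin_apply] at hmem
    have h := congrFun hmem i
    rw [Matrix.mulVec_mulVec] at h
    simpa using h
  have hQt : (1 - p * s₂)ᵀ = 1 - p * s₂ := by
    rw [Matrix.transpose_sub, Matrix.transpose_one, hp4]
  have h1QY : (1 - p * s₂) * Y = 0 := by
    have h := congrArg Matrix.transpose hY1Q
    rw [Matrix.transpose_mul, hQt, hYsym, Matrix.transpose_zero] at h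
    exact h
  have hQY : (p * s₂) * Y = Y := by
    have h := h1QY
    rw [Matrix.sub_mul, Matrix.one_mul, sub_eq_zero] at h
    exact h.symm
  have hYQ : Y * (p * s₂) = Y := by
    have h := hY1Q
    rw [Matrix.mul_sub, Matrix.mul_one, sub_eq_zero] at h
    exact h.symm
  -- part 2 (without the transpose)
  have p2' : s₂ * symJ n * s₂ = symJ n - X * symJ n * Xᵀ := by
    calc s₂ * symJ n * s₂ = (symJ n * s₂) * s₂ := by rw [← hJs]
    _ = symJ n * (1 - X * Xᵀ) := by rw [Matrix.mul_assoc, hss]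
    _ = symJ n - (symJ n * X) * Xᵀ := by
          rw [Matrix.mul_sub, Matrix.mul_one, Matrix.mul_assoc]
    _ = symJ n - X * symJ n * Xᵀ := by rw [← hcomm]
  refine ⟨by rw [hs₂t, hss], by rw [hs₂t]; exact p2', ?_, ?_⟩
  · -- part 3
    rw [hs₂t, hγE, hpt]
    rw [Matrix.mul_add, Matrix.add_mul]
    have hA : s₂ * (p * Y * p) * s₂ = Y := by
      calc s₂ * (p * Y * p) * s₂ = (s₂ * p) * Y * (p * s₂) := by
            simp only [Matrix.mul_assoc]
      _ = (p * s₂) * Y * (p * s₂) := by rw [← hps]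
      _ = Y := by rw [hQY, hYQ]
    have hB : s₂ * (1 - p * s₂) * s₂ = 0 := by
      calc s₂ * (1 - p * s₂) * s₂ = (s₂ - s₂ * p * s₂) * s₂ := by
            rw [Matrix.mul_sub, Matrix.mul_one, Matrix.mul_assoc]
      _ = (s₂ - s₂) * s₂ := by rw [hp1]
      _ = 0 := by rw [sub_self, Matrix.zero_mul]
    rw [hA, hB, add_zero]
  · -- part 4: positivity
    -- lifting to ℂ
    have cmul : ∀ A B : Matrix (Fin n ⊕ Fin n) (Fin n ⊕ Fin n) ℝ,
        (A * B).map Complex.ofReal = A.map Complex.ofReal * B.map Complex.ofReal := by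
      intro A B
      exact Matrix.map_mul (f := Complex.ofRealHom)
    have csub : ∀ A B : Matrix (Fin n ⊕ Fin n) (Fin n ⊕ Fin n) ℝ,
        (A - B).map Complex.ofReal = A.map Complex.ofReal - B.map Complex.ofReal := by
      intro A B; ext i j; simp
    have cadd : ∀ A B : Matrix (Fin n ⊕ Fin n) (Fin n ⊕ Fin n) ℝ,
        (A + B).map Complex.ofReal = A.map Complex.ofReal + B.map Complex.ofReal := by
      intro A B; ext i j; simp
    have cneg : ∀ A : Matrix (Fin n ⊕ Fin n) (Fin n ⊕ Fin n) ℝ,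
        (-A).map Complex.ofReal = -(A.map Complex.ofReal) := by
      intro A; ext i j; simp
    have cone : (1 : Matrix (Fin n ⊕ Fin n) (Fin n ⊕ Fin n) ℝ).map Complex.ofReal = 1 := by
      ext i j; simp [Matrix.one_apply, apply_ite]
    have cH : ∀ A : Matrix (Fin n ⊕ Fin n) (Fin n ⊕ Fin n) ℝ,
        (A.map Complex.ofReal)ᴴ = Aᵀ.map Complex.ofReal := by
      intro A; ext i j
      simp [Matrix.conjTranspose_apply, Complex.conj_ofReal]
    have hγEmap : γE.map Complex.ofReal =
        p.map Complex.ofReal * Y.map Complex.ofReal * p.map Complex.ofReal +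
          (1 - p.map Complex.ofReal * s₂.map Complex.ofReal) := by
      rw [hγE, hpt, cadd, cmul, cmul, csub, cone, cmul]
    rw [hγEmap]
    apply key_psd
    · rw [cH, hpt]
    · rw [← cmul, cH, hp4]
    · rw [cH, hJt, cneg]
    · rw [← cmul, hJJ, cneg, cone]
    · rw [← cmul, ← cmul, hp2]
    · rw [← cmul, ← cmul, hJs]
    · rw [← cmul, ← cmul, hpJ]
    · rw [← cmul, ← cmul, hps]
    · have h : Y.map Complex.ofReal -
          (Complex.I • (symJ n).map Complex.ofReal -
            Complex.I • (X * symJ n * Xᵀ).map Complex.ofReal) =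
          Y.map Complex.ofReal - Complex.I •
            (s₂.map Complex.ofReal * (symJ n).map Complex.ofReal * s₂.map Complex.ofReal) := by
        rw [← smul_sub, ← csub, ← p2', cmul, cmul]
      exact h ▸ hY
end

section
/- Let s₂, s₂' ∈ ℝ^{2n×2l} both be injective with s₂ s₂^T = s₂' (s₂')^T. Then o := s₂^+ s₂' is an orthogonal 2l×2l matrix and s₂' = s₂ o. If moreover s₂ σ_{2l} s₂^T = s₂' σ_{2l} (s₂')^T, then o is also symplectic: o σ_{2l} o^T = σ_{2l}. -/
open Matrix

theorem minimal_dilations_related_by_orthogonal (n l : ℕ)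
    (s₂ s₂' : Matrix (Fin n ⊕ Fin n) (Fin l ⊕ Fin l) ℝ)
    (hinj : Function.Injective s₂.mulVec)
    (hinj' : Function.Injective s₂'.mulVec)
    (hgram : s₂ * s₂ᵀ = s₂' * s₂'ᵀ)
    -- `p` is the Moore–Penrose pseudoinverse of `s₂`:
    (p : Matrix (Fin l ⊕ Fin l) (Fin n ⊕ Fin n) ℝ)
    (hp1 : s₂ * p * s₂ = s₂) (hp2 : p * s₂ * p = p)
    (hp3 : (s₂ * p)ᵀ = s₂ * p) (hp4 : (p * s₂)ᵀ = p * s₂)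
    (o : Matrix (Fin l ⊕ Fin l) (Fin l ⊕ Fin l) ℝ)
    (ho : o = p * s₂') :
    o * oᵀ = 1 ∧ s₂' = s₂ * o ∧
      (s₂ * symJ l * s₂ᵀ = s₂' * symJ l * s₂'ᵀ → o * symJ l * oᵀ = symJ l) := by
  have hps : p * s₂ = 1 := by
    have hv : ∀ v, (p * s₂) *ᵥ v = (1 : Matrix (Fin l ⊕ Fin l) (Fin l ⊕ Fin l) ℝ) *ᵥ v := by
      intro v
      apply hinj
      simp only [Matrix.mulVec_mulVec]
      rw [← Matrix.mul_assoc, hp1, Matrix.mul_one]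
    ext i j
    have := congrFun (hv (Pi.single j 1)) i
    simpa [Matrix.one_apply] using this
  have key : s₂' = s₂ * p * s₂' := by
    have h1 : (s₂ * p) * (s₂ * s₂ᵀ) = s₂ * s₂ᵀ := by
      rw [Matrix.mul_assoc s₂ p _, ← Matrix.mul_assoc p s₂ _, hps, Matrix.one_mul]
    have hM : (s₂' - s₂ * p * s₂') * (s₂' - s₂ * p * s₂')ᵀ = 0 := by
      have h4 : s₂ * p * s₂' * s₂'ᵀ = s₂ * s₂ᵀ := by
        rw [Matrix.mul_assoc (s₂ * p), ← hgram, h1]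
      have hps3 : pᵀ * s₂ᵀ = s₂ * p := by rw [← Matrix.transpose_mul, hp3]
      simp only [Matrix.sub_mul, Matrix.mul_sub, Matrix.transpose_sub, Matrix.transpose_mul, hps3]
      rw [← Matrix.mul_assoc s₂' s₂'ᵀ (s₂ * p), ← Matrix.mul_assoc (s₂ * p * s₂') s₂'ᵀ (s₂ * p),
        h4, ← hgram]
      abel
    have hM' : (s₂' - s₂ * p * s₂') * (s₂' - s₂ * p * s₂')ᴴ = 0 := by
      rw [Matrix.conjTranspose_eq_transpose_of_trivial]; exact hM
    have := Matrix.self_mul_conjTranspose_eq_zero.mp hM'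
    exact sub_eq_zero.mp this
  have hso : s₂' = s₂ * o := by rw [ho, ← Matrix.mul_assoc]; exact key
  refine ⟨?_, hso, ?_⟩
  · rw [ho]
    have e0 : (p * s₂') * (p * s₂')ᵀ = p * (s₂' * s₂'ᵀ) * pᵀ := by
      simp [Matrix.transpose_mul, Matrix.mul_assoc]
    rw [e0, ← hgram]
    have e1 : p * (s₂ * s₂ᵀ) * pᵀ = (p * s₂) * (p * s₂)ᵀ := by
      simp [Matrix.transpose_mul, Matrix.mul_assoc]
    rw [e1, hps]
    simp
  · intro h
    rw [ho]
    have e1 : (p * s₂') * symJ l * (p * s₂')ᵀ = p * (s₂' * symJ l * s₂'ᵀ) * pᵀ := by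
      simp [Matrix.transpose_mul, Matrix.mul_assoc]
    rw [e1, ← h]
    have e2 : p * (s₂ * symJ l * s₂ᵀ) * pᵀ = (p * s₂) * symJ l * (p * s₂)ᵀ := by
      simp [Matrix.transpose_mul, Matrix.mul_assoc]
    rw [e2, hps]
    simp
end

section
/- Let X, Y ∈ ℝ^{2n×2n} with Y symmetric and Y ≥ i(σ_{2n} − X σ_{2n} X^T) as complex Hermitian matrices. Then rank(Y) ≥ rank(σ_{2n} − X σ_{2n} X^T). -/
open Matrix ComplexOrder

theorem rank_Y_ge_rank_Sigma (n : ℕ)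
    (X Y : Matrix (Fin n ⊕ Fin n) (Fin n ⊕ Fin n) ℝ)
    (hYsym : Yᵀ = Y)
    (hY : Matrix.PosSemidef
      (Y.map Complex.ofReal -
        Complex.I • ((symJ n - X * symJ n * Xᵀ).map Complex.ofReal))) :
    (symJ n - X * symJ n * Xᵀ).rank ≤ Y.rank := by
  set S := symJ n - X * symJ n * Xᵀ with hSdef
  have hSskew : Sᵀ = -S := by
    rw [hSdef]
    simp only [Matrix.transpose_sub, Matrix.transpose_mul, symJ_transpose,
      Matrix.transpose_transpose, Matrix.mul_neg, Matrix.neg_mul, neg_sub,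
      Matrix.mul_assoc]
    abel
  -- kernel inclusion
  have hker : LinearMap.ker Y.mulVecLin ≤ LinearMap.ker S.mulVecLin := by
    intro v hv
    rw [LinearMap.mem_ker, Matrix.mulVecLin_apply] at hv ⊢
    set w : (Fin n ⊕ Fin n) → ℂ := fun i => Complex.ofReal (v i) with hw
    have hstarw : star w = w := by
      funext i; simp [hw]
    have hYw : (Y.map Complex.ofReal) *ᵥ w = 0 := by
      funext i
      have := congrFun hv i
      simp only [Matrix.mulVec, dotProduct, Pi.zero_apply] at this ⊢
      simp only [Matrix.map_apply, hw, ← Complex.ofReal_mul, ← Complex.ofReal_sum,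
        this, Complex.ofReal_zero]
    -- skewness kills the quadratic form of S
    have hSquad : w ⬝ᵥ (S.map Complex.ofReal) *ᵥ w = 0 := by
      have hskewC : (S.map Complex.ofReal)ᵀ = -(S.map Complex.ofReal) := by
        rw [← Matrix.transpose_map, hSskew]; ext i j; simp
      have h1 : w ⬝ᵥ (S.map Complex.ofReal) *ᵥ w
          = -(w ⬝ᵥ (S.map Complex.ofReal) *ᵥ w) := by
        conv_lhs => rw [Matrix.dotProduct_mulVec, ← Matrix.mulVec_transpose,
          hskewC, Matrix.neg_mulVec, neg_dotProduct, dotProduct_comm]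
      linear_combination h1 / 2
    have hquad : star w ⬝ᵥ (Y.map Complex.ofReal -
        Complex.I • (S.map Complex.ofReal)) *ᵥ w = 0 := by
      rw [hstarw, Matrix.sub_mulVec, dotProduct_sub, Matrix.smul_mulVec,
        dotProduct_smul, hYw, hSquad, dotProduct_zero]
      simp
    have hMw := (hY.dotProduct_mulVec_zero_iff w).mp hquad
    rw [Matrix.sub_mulVec, hYw, Matrix.smul_mulVec, zero_sub,
      neg_eq_zero] at hMw
    have hSw : (S.map Complex.ofReal) *ᵥ w = 0 := by
      rcases smul_eq_zero.mp hMw with h | h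
      · exact absurd h Complex.I_ne_zero
      · exact h
    funext i
    have := congrFun hSw i
    simp only [Matrix.mulVec, dotProduct, Pi.zero_apply,
      Matrix.map_apply, hw, ← Complex.ofReal_mul, ← Complex.ofReal_sum] at this ⊢
    exact_mod_cast this
  -- rank-nullity
  have hrn : ∀ A : Matrix (Fin n ⊕ Fin n) (Fin n ⊕ Fin n) ℝ,
      A.rank + Module.finrank ℝ (LinearMap.ker A.mulVecLin) = 2 * n := by
    intro A
    have := LinearMap.finrank_range_add_finrank_ker A.mulVecLin
    rw [Matrix.rank]
    simpa [Module.finrank_pi, two_mul] using this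
  have h1 := hrn S
  have h2 := hrn Y
  have hle : Module.finrank ℝ (LinearMap.ker Y.mulVecLin)
      ≤ Module.finrank ℝ (LinearMap.ker S.mulVecLin) :=
    Submodule.finrank_mono hker
  omega
end
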